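/- Every multigraph G with all degrees even can be edge-decomposed into k spanning subgraphs G_1, …, G_k, each with all degrees even, such that for each vertex v and each i, |d_{G_i}(v) − d_G(v)/k| < 2. -/

import Mathlib

open Finset

variable {V E : Type*}

/-- Degree of `v` in the sub-multigraph given by the edge set `S`,
where `ends e` gives the two endpoints of edge `e` (loops count twice). -/
def mdeg [DecidableEq V] (ends : E → V × V) (S : Finset E) (v : V) : ℕ :=
  (S.filter fun e => (ends e).1 = v).card + (S.filter fun e => (ends e).2 = v).card

/-- Number of edges with exactly one end in the vertex set `X`. -/
def cutCard [Fintype E] [DecidableEq V] (ends : E → V × V) (X : Finset V) : ℕ :=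
  (univ.filter fun e : E =>
    ((ends e).1 ∈ X ∧ (ends e).2 ∉ X) ∨ ((ends e).1 ∉ X ∧ (ends e).2 ∈ X)).card

/-- `lam`-edge-connectedness: every edge cut has at least `lam` edges. -/
def EdgeConn [Fintype V] [Fintype E] [DecidableEq V] (ends : E → V × V) (lam : ℕ) : Prop :=
  ∀ X : Finset V, X.Nonempty → X ≠ univ → lam ≤ cutCard ends X

set_option linter.unusedSectionVars false
set_option linter.unusedVariables false
set_option linter.unnecessarySeqFocus false

namespace HiltonAux

section
variable [DecidableEq V]

def indeg (d : E → V × V) (S : Finset E) (v : V) : ℕ :=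
  (S.filter fun e => (d e).2 = v).card

def outdeg (d : E → V × V) (S : Finset E) (v : V) : ℕ :=
  (S.filter fun e => (d e).1 = v).card

lemma indeg_eq_sum (d : E → V × V) (S : Finset E) (v : V) :
    indeg d S v = ∑ e ∈ S, if (d e).2 = v then 1 else 0 := Finset.card_filter _ _

lemma outdeg_eq_sum (d : E → V × V) (S : Finset E) (v : V) :
    outdeg d S v = ∑ e ∈ S, if (d e).1 = v then 1 else 0 := Finset.card_filter _ _

lemma sum_indeg_set (d : E → V × V) (S : Finset E) (A : Finset V) :
    ∑ v ∈ A, indeg d S v = (S.filter fun e => (d e).2 ∈ A).card := by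
  simp only [indeg_eq_sum]
  rw [Finset.sum_comm, Finset.card_filter]
  refine Finset.sum_congr rfl fun e _ => ?_
  rw [Finset.sum_ite_eq A ((d e).2) (fun _ => 1)]

lemma sum_outdeg_set (d : E → V × V) (S : Finset E) (A : Finset V) :
    ∑ v ∈ A, outdeg d S v = (S.filter fun e => (d e).1 ∈ A).card := by
  simp only [outdeg_eq_sum]
  rw [Finset.sum_comm, Finset.card_filter]
  refine Finset.sum_congr rfl fun e _ => ?_
  rw [Finset.sum_ite_eq A ((d e).1) (fun _ => 1)]

lemma sum_indeg [Fintype V] (d : E → V × V) (S : Finset E) :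
    ∑ v, indeg d S v = S.card := by
  rw [sum_indeg_set]; congr 1; simp

lemma sum_outdeg [Fintype V] (d : E → V × V) (S : Finset E) :
    ∑ v, outdeg d S v = S.card := by
  rw [sum_outdeg_set]; congr 1; simp

lemma indeg_mono (d : E → V × V) {F S : Finset E} (h : F ⊆ S) (v : V) :
    indeg d F v ≤ indeg d S v :=
  Finset.card_le_card (Finset.filter_subset_filter _ h)

lemma indeg_sdiff_add (d : E → V × V) {F S : Finset E} [DecidableEq E] (h : F ⊆ S) (v : V) :
    indeg d (S \ F) v + indeg d F v = indeg d S v := by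
  unfold indeg
  conv_rhs => rw [← Finset.sdiff_union_of_subset h]
  rw [Finset.filter_union]
  exact (Finset.card_union_of_disjoint
    (Finset.disjoint_filter_filter Finset.sdiff_disjoint)).symm

lemma outdeg_sdiff_add (d : E → V × V) {F S : Finset E} [DecidableEq E] (h : F ⊆ S) (v : V) :
    outdeg d (S \ F) v + outdeg d F v = outdeg d S v := by
  unfold outdeg
  conv_rhs => rw [← Finset.sdiff_union_of_subset h]
  rw [Finset.filter_union]
  exact (Finset.card_union_of_disjoint
    (Finset.disjoint_filter_filter Finset.sdiff_disjoint)).symm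

lemma indeg_insert (d : E → V × V) {T : Finset E} [DecidableEq E] {e : E} (he : e ∉ T) (v : V) :
    indeg d (insert e T) v = (if (d e).2 = v then 1 else 0) + indeg d T v := by
  unfold indeg
  rw [Finset.filter_insert]
  split
  · rw [Finset.card_insert_of_notMem (fun hc => he (Finset.mem_of_mem_filter _ hc))]; omega
  · omega

lemma outdeg_insert (d : E → V × V) {T : Finset E} [DecidableEq E] {e : E} (he : e ∉ T) (v : V) :
    outdeg d (insert e T) v = (if (d e).1 = v then 1 else 0) + outdeg d T v := by
  unfold outdeg
  rw [Finset.filter_insert]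
  split
  · rw [Finset.card_insert_of_notMem (fun hc => he (Finset.mem_of_mem_filter _ hc))]; omega
  · omega

lemma indeg_erase (d : E → V × V) {T : Finset E} [DecidableEq E] {e : E} (he : e ∈ T) (v : V) :
    indeg d T v = (if (d e).2 = v then 1 else 0) + indeg d (T.erase e) v := by
  have h1 : T = insert e (T.erase e) := (Finset.insert_erase he).symm
  conv_lhs => rw [h1]
  exact indeg_insert d (Finset.notMem_erase _ _) v

lemma outdeg_erase (d : E → V × V) {T : Finset E} [DecidableEq E] {e : E} (he : e ∈ T) (v : V) :
    outdeg d T v = (if (d e).1 = v then 1 else 0) + outdeg d (T.erase e) v := by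
  have h1 : T = insert e (T.erase e) := (Finset.insert_erase he).symm
  conv_lhs => rw [h1]
  exact outdeg_insert d (Finset.notMem_erase _ _) v

/-- directed ends from a flip function -/
def dd (ends : E → V × V) (f : E → Bool) (e : E) : V × V :=
  if f e then (ends e).swap else ends e

lemma mdeg_eq_dd (ends : E → V × V) (f : E → Bool) (S : Finset E) (v : V) :
    mdeg ends S v = outdeg (dd ends f) S v + indeg (dd ends f) S v := by
  unfold mdeg
  rw [outdeg_eq_sum, indeg_eq_sum, Finset.card_filter, Finset.card_filter, ← Finset.sum_add_distrib,
    ← Finset.sum_add_distrib]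
  refine Finset.sum_congr rfl fun e _ => ?_
  by_cases hf : f e <;>
    simp only [dd, hf, if_true, if_false, Prod.fst_swap, Prod.snd_swap, Bool.false_eq_true]
  · exact add_comm _ _


lemma chain_shrink {α : Type*} {r : α → α → Prop} :
    ∀ (n : ℕ) (a b : α) (l : List α), l.length ≤ n → List.Chain r a (l ++ [b]) → a ≠ b →
    ∃ l' : List α, (∀ x ∈ l', x ∈ l) ∧ List.Chain r a (l' ++ [b]) ∧
      (a :: (l' ++ [b])).Nodup := by
  intro n
  induction n with
  | zero =>
    intro a b l hl hc hab
    have : l = [] := List.length_eq_zero_iff.1 (Nat.le_zero.1 hl)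
    subst this
    exact ⟨[], by simp, hc, by simp [hab]⟩
  | succ n ih =>
    intro a b l hl hc hab
    by_cases hnd : (a :: (l ++ [b])).Nodup
    · exact ⟨l, fun x hx => hx, hc, hnd⟩
    by_cases hal : a ∈ l
    · obtain ⟨l₁, l₂, rfl⟩ := List.append_of_mem hal
      have hre : (l₁ ++ a :: l₂) ++ [b] = l₁ ++ a :: (l₂ ++ [b]) := by simp
      rw [hre] at hc
      have hc2 : List.Chain r a (l₂ ++ [b]) := (List.isChain_cons_split.1 hc).2
      have hlen : l₂.length ≤ n := by
        have := hl; simp [List.length_append] at this ⊢; omega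
      obtain ⟨l', hsub, hch, hnd'⟩ := ih a b l₂ hlen hc2 hab
      exact ⟨l', fun x hx => by simp [hsub x hx], hch, hnd'⟩
    · cases l with
      | nil => exact ⟨[], by simp, hc, by simp [hab]⟩
      | cons c l' =>
        have hc' : r a c ∧ List.Chain r c (l' ++ [b]) := by
          simp only [List.Chain, List.cons_append, List.isChain_cons_cons] at hc; exact hc
        by_cases hcb : c = b
        · subst hcb
          exact ⟨[], by simp, by simp [List.Chain, hc'.1], by simp [hab]⟩
        · have hlen : l'.length ≤ n := by simp at hl; omega
          obtain ⟨m, hsub, hch, hnd'⟩ := ih c b l' hlen hc'.2 hcb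
          refine ⟨c :: m, ?_, ?_, ?_⟩
          · intro x hx
            rcases List.mem_cons.1 hx with h | h
            · simp [h]
            · simp [hsub x h]
          · simp only [List.Chain, List.cons_append, List.isChain_cons_cons]; exact ⟨hc'.1, hch⟩
          · rw [List.cons_append, List.nodup_cons]
            refine ⟨?_, hnd'⟩
            intro hmem
            rcases List.mem_cons.1 hmem with h | h
            · exact hal (h ▸ (List.mem_cons_self (a := c) (l := l')))
            · rcases List.mem_append.1 h with h2 | h2
              · exact hal (List.mem_cons_of_mem c (hsub a h2))
              · simp at h2; exact hab h2

lemma exists_nodup_chain {α : Type*} {r : α → α → Prop} {a b : α}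
    (h : Relation.ReflTransGen r a b) (hab : a ≠ b) :
    ∃ l : List α, List.Chain r a (l ++ [b]) ∧ (a :: (l ++ [b])).Nodup := by
  obtain ⟨l, hc, hlast⟩ := List.exists_isChain_cons_of_relationReflTransGen h
  have hne : l ≠ [] := by
    rintro rfl; exact hab (by simpa using hlast)
  have hsplit : l = l.dropLast ++ [b] := by
    conv_lhs => rw [← List.dropLast_append_getLast hne]
    rw [List.getLast_cons hne] at hlast
    rw [hlast]
  rw [hsplit] at hc
  obtain ⟨l', _, hch, hnd⟩ := chain_shrink l.dropLast.length a b l.dropLast (le_refl _) hc hab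
  exact ⟨l', hch, hnd⟩


/-- toggle flips on a set -/
def tog [DecidableEq E] (T : Finset E) (f : E → Bool) : E → Bool :=
  fun e => if e ∈ T then !(f e) else f e

lemma tog_eq_of_not_mem [DecidableEq E] {T : Finset E} (f : E → Bool) {e : E} (he : e ∉ T) :
    tog T f e = f e := by simp [tog, he]

lemma dd_swap_of_flip (ends : E → V × V) {g g' : E → Bool} {e : E} (h : g' e = !(g e)) :
    dd ends g' e = (dd ends g e).swap := by
  unfold dd; rw [h]; cases hg : g e <;> simp

/-- one-edge update of in/out degrees -/
lemma indeg_update [Fintype E] [DecidableEq E] (g g' : E → V × V) (e₀ : E)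
    (hsame : ∀ e, e ≠ e₀ → g' e = g e) (hswap : g' e₀ = (g e₀).swap) (v : V) :
    indeg g' univ v + (if (g e₀).2 = v then 1 else 0)
      = indeg g univ v + (if (g e₀).1 = v then 1 else 0) := by
  have e1 : ∑ e : E, (if (g' e).2 = v then (1:ℕ) else 0)
      = ∑ e ∈ univ \ {e₀}, (if (g' e).2 = v then 1 else 0) + (if (g' e₀).2 = v then 1 else 0) :=
    Finset.sum_eq_sum_sdiff_singleton_add (Finset.mem_univ e₀) _
  have e2 : ∑ e : E, (if (g e).2 = v then (1:ℕ) else 0)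
      = ∑ e ∈ univ \ {e₀}, (if (g e).2 = v then 1 else 0) + (if (g e₀).2 = v then 1 else 0) :=
    Finset.sum_eq_sum_sdiff_singleton_add (Finset.mem_univ e₀) _
  have h1 : ∑ e ∈ univ \ {e₀}, (if (g' e).2 = v then (1:ℕ) else 0)
      = ∑ e ∈ univ \ {e₀}, (if (g e).2 = v then 1 else 0) := by
    refine Finset.sum_congr rfl fun e he => ?_
    rw [hsame e (by simpa using (Finset.mem_sdiff.1 he).2)]
  rw [indeg_eq_sum, indeg_eq_sum, e1, e2, h1, hswap, Prod.snd_swap]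
  omega

lemma outdeg_update [Fintype E] [DecidableEq E] (g g' : E → V × V) (e₀ : E)
    (hsame : ∀ e, e ≠ e₀ → g' e = g e) (hswap : g' e₀ = (g e₀).swap) (v : V) :
    outdeg g' univ v + (if (g e₀).1 = v then 1 else 0)
      = outdeg g univ v + (if (g e₀).2 = v then 1 else 0) := by
  have e1 : ∑ e : E, (if (g' e).1 = v then (1:ℕ) else 0)
      = ∑ e ∈ univ \ {e₀}, (if (g' e).1 = v then 1 else 0) + (if (g' e₀).1 = v then 1 else 0) :=
    Finset.sum_eq_sum_sdiff_singleton_add (Finset.mem_univ e₀) _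
  have e2 : ∑ e : E, (if (g e).1 = v then (1:ℕ) else 0)
      = ∑ e ∈ univ \ {e₀}, (if (g e).1 = v then 1 else 0) + (if (g e₀).1 = v then 1 else 0) :=
    Finset.sum_eq_sum_sdiff_singleton_add (Finset.mem_univ e₀) _
  have h1 : ∑ e ∈ univ \ {e₀}, (if (g' e).1 = v then (1:ℕ) else 0)
      = ∑ e ∈ univ \ {e₀}, (if (g e).1 = v then 1 else 0) := by
    refine Finset.sum_congr rfl fun e he => ?_
    rw [hsame e (by simpa using (Finset.mem_sdiff.1 he).2)]
  rw [outdeg_eq_sum, outdeg_eq_sum, e1, e2, h1, hswap, Prod.fst_swap]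
  omega

lemma flip_chain [Fintype V] [Fintype E] [DecidableEq E] (ends : E → V × V) (f : E → Bool) :
    ∀ (l : List V) (p q : V),
    List.Chain (fun a b => ∃ e : E, dd ends f e = (a, b)) p (l ++ [q]) →
    (p :: (l ++ [q])).Nodup →
    ∃ T : Finset E, (∀ e ∈ T, (dd ends f e).1 ∈ p :: (l ++ [q])) ∧
      (∀ v, indeg (dd ends (tog T f)) univ v + (if q = v then 1 else 0)
          = indeg (dd ends f) univ v + (if p = v then 1 else 0)) ∧
      (∀ v, outdeg (dd ends (tog T f)) univ v + (if p = v then 1 else 0)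
          = outdeg (dd ends f) univ v + (if q = v then 1 else 0)) := by
  intro l
  induction l with
  | nil =>
    intro p q hc hnd
    obtain ⟨e₀, he₀⟩ : ∃ e : E, dd ends f e = (p, q) := (List.chain_cons.1 hc).1
    refine ⟨{e₀}, ?_, ?_, ?_⟩
    · intro e he
      rw [Finset.mem_singleton] at he
      subst he; rw [he₀]; simp
    · intro v
      have := indeg_update (dd ends f) (dd ends (tog {e₀} f)) e₀
        (fun e he => by
          have : e ∉ ({e₀} : Finset E) := by simpa using he
          rw [dd, dd, tog_eq_of_not_mem f this])
        (dd_swap_of_flip ends (by simp [tog])) v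
      rw [he₀] at this
      simpa using this
    · intro v
      have := outdeg_update (dd ends f) (dd ends (tog {e₀} f)) e₀
        (fun e he => by
          have : e ∉ ({e₀} : Finset E) := by simpa using he
          rw [dd, dd, tog_eq_of_not_mem f this])
        (dd_swap_of_flip ends (by simp [tog])) v
      rw [he₀] at this
      simpa using this
  | cons c l' ih =>
    intro p q hc hnd
    simp only [List.Chain, List.cons_append, List.isChain_cons_cons] at hc
    obtain ⟨⟨e₀, he₀⟩, hc'⟩ := hc
    have hnd' : (c :: (l' ++ [q])).Nodup := (List.nodup_cons.1 (by simpa using hnd)).2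
    obtain ⟨T, hT, hin, hout⟩ := ih c q hc' hnd'
    have hpT : e₀ ∉ T := by
      intro hmem
      have := hT e₀ hmem
      rw [he₀] at this
      have hpnot : p ∉ c :: (l' ++ [q]) := (List.nodup_cons.1 (by simpa using hnd)).1
      exact hpnot this
    have htog : tog (insert e₀ T) f = tog {e₀} (tog T f) := by
      funext e
      by_cases he : e = e₀
      · subst he; simp [tog, hpT]
      · by_cases heT : e ∈ T <;> simp [tog, he, heT]
    have hgsame : ∀ e, e ≠ e₀ → dd ends (tog (insert e₀ T) f) e = dd ends (tog T f) e := by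
      intro e he
      rw [htog, dd, dd, tog_eq_of_not_mem (tog T f) (by simpa using he)]
    have hgswap : dd ends (tog (insert e₀ T) f) e₀ = (dd ends (tog T f) e₀).swap := by
      rw [htog]
      exact dd_swap_of_flip ends (by simp [tog])
    have he₀T : dd ends (tog T f) e₀ = (p, c) := by
      rw [dd, tog_eq_of_not_mem f hpT, ← dd, he₀]
    refine ⟨insert e₀ T, ?_, ?_, ?_⟩
    · intro e he
      rcases Finset.mem_insert.1 he with h | h
      · subst h; rw [he₀]; simp
      · exact List.mem_cons_of_mem _ (hT e h)
    · intro v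
      have h2 := indeg_update (dd ends (tog T f)) (dd ends (tog (insert e₀ T) f)) e₀
        hgsame hgswap v
      rw [he₀T] at h2
      have h3 := hin v
      simp only at h2 h3 ⊢
      omega
    · intro v
      have h2 := outdeg_update (dd ends (tog T f)) (dd ends (tog (insert e₀ T) f)) e₀
        hgsame hgswap v
      rw [he₀T] at h2
      have h3 := hout v
      simp only at h2 h3 ⊢
      omega

lemma euler_orient [Fintype V] [Fintype E] (ends : E → V × V)
    (heven : ∀ v, Even (mdeg ends univ v)) :
    ∃ f : E → Bool, ∀ v, indeg (dd ends f) univ v = outdeg (dd ends f) univ v := by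
  classical
  suffices h : ∀ (n : ℕ) (f : E → Bool),
      (∑ v, ((indeg (dd ends f) univ v : ℤ) - outdeg (dd ends f) univ v).natAbs) ≤ n →
      ∃ f', ∀ v, indeg (dd ends f') univ v = outdeg (dd ends f') univ v by
    exact h _ (fun _ => false) (le_refl _)
  intro n
  induction n using Nat.strong_induction_on with
  | _ n ihn =>
  intro f hΦ
  set g := dd ends f with hg
  by_cases hdone : ∀ v, indeg g univ v = outdeg g univ v
  · exact ⟨f, hdone⟩
  push_neg at hdone
  obtain ⟨v₁, hv₁⟩ := hdone
  have hDeven : ∀ v, ((indeg g univ v : ℤ) - outdeg g univ v) % 2 = 0 := by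
    intro v
    obtain ⟨m, hm⟩ := heven v
    have h2 := mdeg_eq_dd ends f univ v
    rw [hm, ← hg] at h2
    omega
  have hDsum : ∑ v, ((indeg g univ v : ℤ) - outdeg g univ v) = 0 := by
    rw [Finset.sum_sub_distrib]
    have h1 : ∑ v, ((indeg g univ v : ℤ)) = (univ : Finset E).card := by
      rw [← Nat.cast_sum]
      exact Nat.cast_inj.mpr (sum_indeg g univ)
    have h2 : ∑ v, ((outdeg g univ v : ℤ)) = (univ : Finset E).card := by
      rw [← Nat.cast_sum]
      exact Nat.cast_inj.mpr (sum_outdeg g univ)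
    rw [h1, h2]; ring
  -- find a vertex with positive imbalance
  have hpos : ∃ v₀, (outdeg g univ v₀ : ℤ) < indeg g univ v₀ := by
    by_contra hno
    push_neg at hno
    have hlt : ∑ v, ((indeg g univ v : ℤ) - outdeg g univ v) < 0 := by
      have hv₁' : (indeg g univ v₁ : ℤ) - outdeg g univ v₁ < 0 := by
        have h := hno v₁
        omega
      calc ∑ v, ((indeg g univ v : ℤ) - outdeg g univ v)
          < ∑ v : V, (0 : ℤ) := by
            refine Finset.sum_lt_sum (fun i _ => by have := hno i; omega)
              ⟨v₁, Finset.mem_univ v₁, hv₁'⟩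
        _ = 0 := by simp
    omega
  obtain ⟨v₀, hv₀⟩ := hpos
  -- reachability towards v₀
  set r : V → V → Prop := fun a b => ∃ e : E, g e = (a, b) with hr
  set X : Set V := {w | Relation.ReflTransGen r w v₀} with hX
  have hclosed : ∀ e : E, (g e).2 ∈ X → (g e).1 ∈ X := by
    intro e he
    exact Relation.ReflTransGen.head ⟨e, rfl⟩ he
  set Xf : Finset V := univ.filter (· ∈ X) with hXf
  have hv₀X : v₀ ∈ Xf := by
    simp only [hXf, Finset.mem_filter, Finset.mem_univ, true_and]
    exact Relation.ReflTransGen.refl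
  have hsumX : ∑ w ∈ Xf, ((indeg g univ w : ℤ) - outdeg g univ w) ≤ 0 := by
    rw [Finset.sum_sub_distrib]
    have h1 : ∑ w ∈ Xf, (indeg g univ w : ℤ) = ((univ.filter fun e : E => (g e).2 ∈ Xf).card : ℤ) := by
      rw [← Nat.cast_sum]; exact Nat.cast_inj.mpr (sum_indeg_set g univ Xf)
    have h2 : ∑ w ∈ Xf, (outdeg g univ w : ℤ) = ((univ.filter fun e : E => (g e).1 ∈ Xf).card : ℤ) := by
      rw [← Nat.cast_sum]; exact Nat.cast_inj.mpr (sum_outdeg_set g univ Xf)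
    rw [h1, h2]
    have hsub : (univ.filter fun e : E => (g e).2 ∈ Xf) ⊆ (univ.filter fun e : E => (g e).1 ∈ Xf) := by
      intro e he
      rw [Finset.mem_filter] at he ⊢
      refine ⟨he.1, ?_⟩
      have : (g e).2 ∈ X := by simpa [hXf] using he.2
      have := hclosed e this
      simp [hXf, this]
    have := Finset.card_le_card hsub
    omega
  have hneg : ∃ w₀ ∈ Xf, (indeg g univ w₀ : ℤ) < outdeg g univ w₀ := by
    by_contra hno
    push_neg at hno
    have : (0 : ℤ) < ∑ w ∈ Xf, ((indeg g univ w : ℤ) - outdeg g univ w) := by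
      calc (0:ℤ) = ∑ w ∈ Xf, (0:ℤ) := by simp
        _ < _ := Finset.sum_lt_sum (fun i hi => by have := hno i hi; omega)
            ⟨v₀, hv₀X, by omega⟩
    omega
  obtain ⟨w₀, hw₀X, hw₀⟩ := hneg
  have hwv : w₀ ≠ v₀ := by intro h; rw [h] at hw₀; omega
  have hreach : Relation.ReflTransGen r w₀ v₀ := by
    have := (Finset.mem_filter.1 hw₀X).2
    simpa [hX] using this
  obtain ⟨l, hchain, hnd⟩ := exists_nodup_chain hreach hwv
  obtain ⟨T, _, hin, hout⟩ := flip_chain ends f l w₀ v₀ hchain hnd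
  set f' := tog T f with hf'
  -- potential decreases
  have hkey : ∀ v, ((indeg (dd ends f') univ v : ℤ) - outdeg (dd ends f') univ v).natAbs ≤
      ((indeg g univ v : ℤ) - outdeg g univ v).natAbs := by
    intro v
    have h1 := hin v
    have h2 := hout v
    rw [← hg] at h1 h2
    have he := hDeven v
    by_cases hvw : w₀ = v
    · subst hvw
      have hD := hw₀
      have hvv : ¬ (v₀ = w₀) := fun h => hwv h.symm
      simp [hvv] at h1 h2
      omega
    · by_cases hvv : v₀ = v
      · subst hvv
        have hD := hv₀
        simp [hvw] at h1 h2
        omega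
      · simp [hvw, hvv] at h1 h2
        omega
  have hstrict : ((indeg (dd ends f') univ v₀ : ℤ) - outdeg (dd ends f') univ v₀).natAbs <
      ((indeg g univ v₀ : ℤ) - outdeg g univ v₀).natAbs := by
    have h1 := hin v₀
    have h2 := hout v₀
    rw [← hg] at h1 h2
    have he := hDeven v₀
    have hv₀' := hv₀
    simp [hwv] at h1 h2
    omega
  have hΦ' : (∑ v, ((indeg (dd ends f') univ v : ℤ) - outdeg (dd ends f') univ v).natAbs) < n := by
    calc (∑ v, ((indeg (dd ends f') univ v : ℤ) - outdeg (dd ends f') univ v).natAbs)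
        < ∑ v, ((indeg g univ v : ℤ) - outdeg g univ v).natAbs :=
          Finset.sum_lt_sum (fun i _ => hkey i) ⟨v₀, Finset.mem_univ v₀, hstrict⟩
      _ ≤ n := hΦ
  exact ihn _ hΦ' f' (le_refl _)


/-- residual relation for augmenting -/
def Rel2 (d : E → V × V) (k : ℕ) (S F : Finset E) : (V × Bool) → (V × Bool) → Prop :=
  fun p q =>
    (∃ e ∈ S, e ∉ F ∧ d e = (p.1, q.1) ∧ p.2 = true ∧ q.2 = false) ∨
    (∃ e ∈ F, d e = (q.1, p.1) ∧ p.2 = false ∧ q.2 = true) ∨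
    (q.1 = p.1 ∧ p.2 = false ∧ q.2 = true ∧ k * indeg d F p.1 < indeg d S p.1) ∨
    (q.1 = p.1 ∧ p.2 = true ∧ q.2 = false ∧ indeg d S p.1 < k * indeg d F p.1)

lemma iteF_zero {p : V × Bool} (hp : p.2 = true) (w : V) :
    (if p = (w, false) then (1:ℤ) else 0) = 0 := by
  rw [if_neg]; intro h; rw [h] at hp; simp at hp

lemma iteT_zero {p : V × Bool} (hp : p.2 = false) (w : V) :
    (if p = (w, true) then (1:ℤ) else 0) = 0 := by
  rw [if_neg]; intro h; rw [h] at hp; simp at hp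

lemma iteF_fst {p : V × Bool} (hp : p.2 = false) (w : V) :
    (if p = (w, false) then (1:ℤ) else 0) = (if p.1 = w then 1 else 0) :=
  if_congr ⟨fun h => by rw [h], fun h => Prod.ext_iff.mpr ⟨h, hp⟩⟩ rfl rfl

lemma iteT_fst {p : V × Bool} (hp : p.2 = true) (w : V) :
    (if p = (w, true) then (1:ℤ) else 0) = (if p.1 = w then 1 else 0) :=
  if_congr ⟨fun h => by rw [h], fun h => Prod.ext_iff.mpr ⟨h, hp⟩⟩ rfl rfl

lemma aug_chain [Fintype V] [Fintype E] [DecidableEq E] (d : E → V × V) (k : ℕ)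
    (S F : Finset E) (hFS : F ⊆ S) :
    ∀ (l : List (V × Bool)) (p q : V × Bool),
    List.Chain (Rel2 d k S F) p (l ++ [q]) → (p :: (l ++ [q])).Nodup →
    ∃ (Ta Td : Finset E) (ε : V → ℤ),
      Ta ⊆ S ∧ (∀ e ∈ Ta, e ∉ F) ∧ Td ⊆ F ∧
      (∀ e ∈ Ta, ((d e).2, false) ∈ l ++ [q]) ∧
      (∀ e ∈ Td, ((d e).1, true) ∈ l ++ [q]) ∧
      (∀ w, ε w = 1 ∨ ε w = 0 ∨ ε w = -1) ∧
      (∀ w, ε w = 1 → k * indeg d F w < indeg d S w ∧ ((w, true) ∈ l ++ [q])) ∧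
      (∀ w, ε w = -1 → indeg d S w < k * indeg d F w ∧ ((w, false) ∈ l ++ [q])) ∧
      (∀ w, (indeg d ((F ∪ Ta) \ Td) w : ℤ) = indeg d F w + ε w
         + (if q = (w, false) then 1 else 0) - (if p = (w, false) then 1 else 0)) ∧
      (∀ w, (outdeg d ((F ∪ Ta) \ Td) w : ℤ) = outdeg d F w + ε w
         - (if q = (w, true) then 1 else 0) + (if p = (w, true) then 1 else 0)) := by
  intro l
  induction l with
  | nil =>
    intro p q hc hnd
    have hrel : Rel2 d k S F p q := (List.chain_cons.1 hc).1
    rcases hrel with ⟨e₀, heS, henF, hde, hp2, hq2⟩ | ⟨e₀, heF, hde, hp2, hq2⟩ |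
      ⟨hq1, hp2, hq2, hcap⟩ | ⟨hq1, hp2, hq2, hcap⟩
    · -- ext-fwd
      refine ⟨{e₀}, ∅, fun _ => 0, by simpa using heS, ?_, by simp, ?_, by simp, by simp,
        by simp, by simp, ?_, ?_⟩
      · intro e he; rw [Finset.mem_singleton] at he; subst he; exact henF
      · intro e he; rw [Finset.mem_singleton] at he; subst he
        simp only [List.nil_append, List.mem_singleton, hde]
        exact (Prod.ext_iff.mpr ⟨rfl, hq2⟩ : q = ((p.1, q.1).2, false)).symm
      · intro w
        rw [Finset.sdiff_empty, Finset.union_comm, ← Finset.insert_eq,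
          indeg_insert d henF w, hde, iteF_zero hp2]
        by_cases h2 : q = (w, false)
        · have h1 : q.1 = w := by rw [h2]
          simp [h2, h1] <;> omega
        · have h1 : ¬ (q.1 = w) := fun h => h2 (Prod.ext_iff.mpr ⟨h, hq2⟩)
          simp [h2, h1]
      · intro w
        rw [Finset.sdiff_empty, Finset.union_comm, ← Finset.insert_eq,
          outdeg_insert d henF w, hde, iteT_zero hq2]
        by_cases h2 : p = (w, true)
        · have h1 : p.1 = w := by rw [h2]
          simp [h2, h1] <;> omega
        · have h1 : ¬ (p.1 = w) := fun h => h2 (Prod.ext_iff.mpr ⟨h, hp2⟩)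
          simp [h2, h1]
    · -- ext-bwd
      refine ⟨∅, {e₀}, fun _ => 0, by simp, by simp, by simpa using heF, by simp, ?_,
        by simp, by simp, by simp, ?_, ?_⟩
      · intro e he; rw [Finset.mem_singleton] at he; subst he
        simp only [List.nil_append, List.mem_singleton, hde]
        exact (Prod.ext_iff.mpr ⟨rfl, hq2⟩ : q = ((q.1, p.1).1, true)).symm
      · intro w
        have herase : indeg d (F ∪ ∅) w
            = (if (d e₀).2 = w then 1 else 0) + indeg d ((F ∪ ∅).erase e₀) w :=
          indeg_erase d (Finset.mem_union_left ∅ heF) w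
        rw [← Finset.erase_eq, iteF_zero hq2]
        rw [Finset.union_empty] at herase ⊢
        rw [hde] at herase
        by_cases h2 : p = (w, false)
        · have h1 : p.1 = w := by rw [h2]
          simp only [h1] at herase
          simp [h2, herase]
        · have h1 : ¬ (p.1 = w) := fun h => h2 (Prod.ext_iff.mpr ⟨h, hp2⟩)
          simp only [h1] at herase
          simp [h2, herase]
      · intro w
        have herase : outdeg d (F ∪ ∅) w
            = (if (d e₀).1 = w then 1 else 0) + outdeg d ((F ∪ ∅).erase e₀) w :=
          outdeg_erase d (Finset.mem_union_left ∅ heF) w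
        rw [← Finset.erase_eq, iteT_zero hp2]
        rw [Finset.union_empty] at herase ⊢
        rw [hde] at herase
        by_cases h2 : q = (w, true)
        · have h1 : q.1 = w := by rw [h2]
          simp only [h1] at herase
          simp [h2, herase]
        · have h1 : ¬ (q.1 = w) := fun h => h2 (Prod.ext_iff.mpr ⟨h, hq2⟩)
          simp only [h1] at herase
          simp [h2, herase]
    · -- int-fwd : p = (x,false), q = (x,true)
      refine ⟨∅, ∅, fun w => if w = p.1 then 1 else 0, by simp, by simp, by simp,
        by simp, by simp, ?_, ?_, ?_, ?_, ?_⟩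
      · intro w; dsimp only; split <;> simp
      · intro w hw
        dsimp only at hw
        have hwp : w = p.1 := by by_contra hne; rw [if_neg hne] at hw; omega
        subst hwp
        refine ⟨hcap, ?_⟩
        simp only [List.nil_append, List.mem_singleton]
        exact (Prod.ext_iff.mpr ⟨hq1, hq2⟩ : q = (p.1, true)).symm
      · intro w hw
        dsimp only at hw
        exfalso
        by_cases hwp : w = p.1 <;> simp [hwp] at hw
      · intro w
        dsimp only
        rw [Finset.union_empty, Finset.sdiff_empty, iteF_zero hq2, iteF_fst hp2]
        rcases eq_or_ne w p.1 with h1 | h1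
        · rw [if_pos h1, if_pos h1.symm]; ring
        · rw [if_neg h1, if_neg (Ne.symm h1)]; ring
      · intro w
        dsimp only
        rw [Finset.union_empty, Finset.sdiff_empty, iteT_zero hp2, iteT_fst hq2, hq1]
        rcases eq_or_ne w p.1 with h1 | h1
        · rw [if_pos h1, if_pos h1.symm]; ring
        · rw [if_neg h1, if_neg (Ne.symm h1)]; ring
    · -- int-bwd : p = (x,true), q = (x,false)
      refine ⟨∅, ∅, fun w => if w = p.1 then -1 else 0, by simp, by simp, by simp,
        by simp, by simp, ?_, ?_, ?_, ?_, ?_⟩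
      · intro w; dsimp only; split <;> simp
      · intro w hw
        dsimp only at hw
        exfalso
        by_cases hwp : w = p.1 <;> simp [hwp] at hw
      · intro w hw
        dsimp only at hw
        have hwp : w = p.1 := by by_contra hne; rw [if_neg hne] at hw; omega
        subst hwp
        refine ⟨hcap, ?_⟩
        simp only [List.nil_append, List.mem_singleton]
        exact (Prod.ext_iff.mpr ⟨hq1, hq2⟩ : q = (p.1, false)).symm
      · intro w
        dsimp only
        rw [Finset.union_empty, Finset.sdiff_empty, iteF_zero hp2, iteF_fst hq2, hq1]
        rcases eq_or_ne w p.1 with h1 | h1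
        · rw [if_pos h1, if_pos h1.symm]; ring
        · rw [if_neg h1, if_neg (Ne.symm h1)]; ring
      · intro w
        dsimp only
        rw [Finset.union_empty, Finset.sdiff_empty, iteT_zero hq2, iteT_fst hp2]
        rcases eq_or_ne w p.1 with h1 | h1
        · rw [if_pos h1, if_pos h1.symm]; ring
        · rw [if_neg h1, if_neg (Ne.symm h1)]; ring
  | cons p₂ l' ih =>
    intro p q hc hnd
    simp only [List.Chain, List.cons_append, List.isChain_cons_cons] at hc
    obtain ⟨hrel, hc'⟩ := hc
    have hnd2 : (p₂ :: (l' ++ [q])).Nodup := (List.nodup_cons.1 (by simpa using hnd)).2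
    have hpnot : p ∉ p₂ :: (l' ++ [q]) := (List.nodup_cons.1 (by simpa using hnd)).1
    have hp2not : p₂ ∉ l' ++ [q] := (List.nodup_cons.1 hnd2).1
    obtain ⟨Ta, Td, ε, hTaS, hTaF, hTdF, hTaM, hTdM, hεv, hε1, hε2, hin, hout⟩ :=
      ih p₂ q hc' hnd2
    rcases hrel with ⟨e₀, heS, henF, hde, hp2, hq2⟩ | ⟨e₀, heF, hde, hp2, hq2⟩ |
      ⟨hq1, hp2, hq2, hcap⟩ | ⟨hq1, hp2, hq2, hcap⟩
    · -- ext-fwd p → p₂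
      have hp₂eq : p₂ = (p₂.1, false) := Prod.ext_iff.mpr ⟨rfl, hq2⟩
      have he₀Ta : e₀ ∉ Ta := by
        intro hmem
        have hm := hTaM e₀ hmem
        rw [hde] at hm
        exact hp2not (by rw [hp₂eq]; exact hm)
      have he₀Td : e₀ ∉ Td := fun h => henF (hTdF h)
      have he₀sd : e₀ ∉ (F ∪ Ta) \ Td := by
        simp only [Finset.mem_sdiff, Finset.mem_union]
        rintro ⟨h | h, -⟩
        · exact henF h
        · exact he₀Ta h
      have hunion : (F ∪ insert e₀ Ta) \ Td = insert e₀ ((F ∪ Ta) \ Td) := by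
        rw [Finset.union_insert, Finset.insert_sdiff_of_notMem _ he₀Td]
      refine ⟨insert e₀ Ta, Td, ε, ?_, ?_, hTdF, ?_, ?_, hεv, ?_, ?_, ?_, ?_⟩
      · intro e he
        rcases Finset.mem_insert.1 he with h | h
        · subst h; exact heS
        · exact hTaS h
      · intro e he
        rcases Finset.mem_insert.1 he with h | h
        · subst h; exact henF
        · exact hTaF e h
      · intro e he
        rw [List.cons_append]
        rcases Finset.mem_insert.1 he with h | h
        · subst h
          refine List.mem_cons.2 (Or.inl ?_)
          rw [hde]
          exact hp₂eq.symm
        · exact List.mem_cons_of_mem _ (hTaM e h)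
      · intro e he
        rw [List.cons_append]
        exact List.mem_cons_of_mem _ (hTdM e he)
      · intro w hw
        obtain ⟨hb, hm⟩ := hε1 w hw
        exact ⟨hb, by rw [List.cons_append]; exact List.mem_cons_of_mem _ hm⟩
      · intro w hw
        obtain ⟨hb, hm⟩ := hε2 w hw
        exact ⟨hb, by rw [List.cons_append]; exact List.mem_cons_of_mem _ hm⟩
      · intro w
        have hIH := hin w
        rw [iteF_fst hq2 w] at hIH
        rw [hunion, indeg_insert d he₀sd w, hde, iteF_zero hp2]
        push_cast
        rcases eq_or_ne p₂.1 w with h1 | h1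
        · simp only [if_pos h1] at hIH ⊢; linarith [hIH]
        · simp only [if_neg h1] at hIH ⊢; linarith [hIH]
      · intro w
        have hIH := hout w
        rw [iteT_zero hq2 w] at hIH
        rw [hunion, outdeg_insert d he₀sd w, hde, iteT_fst hp2]
        push_cast
        rcases eq_or_ne p.1 w with h1 | h1
        · simp only [if_pos h1] at hIH ⊢; linarith [hIH]
        · simp only [if_neg h1] at hIH ⊢; linarith [hIH]
    · -- ext-bwd p → p₂, e₀ ∈ F, d e₀ = (p₂.1, p.1)
      have hp₂eq : p₂ = (p₂.1, true) := Prod.ext_iff.mpr ⟨rfl, hq2⟩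
      have he₀Td : e₀ ∉ Td := by
        intro hmem
        have hm := hTdM e₀ hmem
        rw [hde] at hm
        exact hp2not (by rw [hp₂eq]; exact hm)
      have he₀Ta : e₀ ∉ Ta := fun h => hTaF e₀ h heF
      have he₀sd : e₀ ∈ (F ∪ Ta) \ Td :=
        Finset.mem_sdiff.2 ⟨Finset.mem_union_left _ heF, he₀Td⟩
      have hunion : (F ∪ Ta) \ insert e₀ Td = ((F ∪ Ta) \ Td).erase e₀ := by
        ext a
        simp only [Finset.mem_sdiff, Finset.mem_insert, Finset.mem_erase]
        tauto
      refine ⟨Ta, insert e₀ Td, ε, hTaS, hTaF, ?_, ?_, ?_, hεv, ?_, ?_, ?_, ?_⟩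
      · intro e he
        rcases Finset.mem_insert.1 he with h | h
        · subst h; exact heF
        · exact hTdF h
      · intro e he
        rw [List.cons_append]
        exact List.mem_cons_of_mem _ (hTaM e he)
      · intro e he
        rw [List.cons_append]
        rcases Finset.mem_insert.1 he with h | h
        · subst h
          refine List.mem_cons.2 (Or.inl ?_)
          rw [hde]
          exact hp₂eq.symm
        · exact List.mem_cons_of_mem _ (hTdM e h)
      · intro w hw
        obtain ⟨hb, hm⟩ := hε1 w hw
        exact ⟨hb, by rw [List.cons_append]; exact List.mem_cons_of_mem _ hm⟩
      · intro w hw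
        obtain ⟨hb, hm⟩ := hε2 w hw
        exact ⟨hb, by rw [List.cons_append]; exact List.mem_cons_of_mem _ hm⟩
      · intro w
        have hIH := hin w
        rw [iteF_zero hq2 w] at hIH
        have herase := indeg_erase d he₀sd w
        rw [hde] at herase
        rw [herase] at hIH
        push_cast at hIH
        rw [hunion, iteF_fst hp2]
        rcases eq_or_ne p.1 w with h1 | h1
        · simp only [if_pos h1] at hIH ⊢; linarith [hIH]
        · simp only [if_neg h1] at hIH ⊢; linarith [hIH]
      · intro w
        have hIH := hout w
        rw [iteT_fst hq2 w] at hIH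
        have herase := outdeg_erase d he₀sd w
        rw [hde] at herase
        rw [herase] at hIH
        push_cast at hIH
        rw [hunion, iteT_zero hp2]
        rcases eq_or_ne p₂.1 w with h1 | h1
        · simp only [if_pos h1] at hIH ⊢; linarith [hIH]
        · simp only [if_neg h1] at hIH ⊢; linarith [hIH]
    · -- int-fwd : p = (x,false), p₂ = (x,true)
      have hp₂eq : p₂ = (p.1, true) := Prod.ext_iff.mpr ⟨hq1, hq2⟩
      have hpeq : p = (p.1, false) := Prod.ext_iff.mpr ⟨rfl, hp2⟩
      have hε0 : ε p.1 = 0 := by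
        rcases hεv p.1 with h | h | h
        · exfalso
          obtain ⟨-, hm⟩ := hε1 p.1 h
          exact hp2not (hp₂eq ▸ hm)
        · exact h
        · exfalso
          obtain ⟨-, hm⟩ := hε2 p.1 h
          exact hpnot (List.mem_cons_of_mem _ (hpeq ▸ hm))
      refine ⟨Ta, Td, fun w => if w = p.1 then ε w + 1 else ε w, hTaS, hTaF, hTdF, ?_, ?_,
        ?_, ?_, ?_, ?_, ?_⟩
      · intro e he
        rw [List.cons_append]
        exact List.mem_cons_of_mem _ (hTaM e he)
      · intro e he
        rw [List.cons_append]
        exact List.mem_cons_of_mem _ (hTdM e he)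
      · intro w
        dsimp only
        by_cases h : w = p.1
        · subst h; rw [if_pos rfl, hε0]; simp
        · rw [if_neg h]; exact hεv w
      · intro w hw
        dsimp only at hw
        by_cases h : w = p.1
        · subst h
          refine ⟨hcap, ?_⟩
          rw [List.cons_append]
          exact hp₂eq ▸ (List.mem_cons_self (a := p₂))
        · rw [if_neg h] at hw
          obtain ⟨hb, hm⟩ := hε1 w hw
          exact ⟨hb, by rw [List.cons_append]; exact List.mem_cons_of_mem _ hm⟩
      · intro w hw
        dsimp only at hw
        by_cases h : w = p.1
        · subst h; rw [if_pos rfl, hε0] at hw; omega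
        · rw [if_neg h] at hw
          obtain ⟨hb, hm⟩ := hε2 w hw
          exact ⟨hb, by rw [List.cons_append]; exact List.mem_cons_of_mem _ hm⟩
      · intro w
        dsimp only
        have hIH := hin w
        rw [iteF_zero (show p₂.2 = true by rw [hp₂eq]) w] at hIH
        rw [iteF_fst hp2]
        rcases eq_or_ne w p.1 with h1 | h1
        · simp only [if_pos h1, if_pos h1.symm] at hIH ⊢; linarith [hIH]
        · simp only [if_neg h1, if_neg (Ne.symm h1)] at hIH ⊢; linarith [hIH]
      · intro w
        dsimp only
        have hIH := hout w
        rw [iteT_fst (show p₂.2 = true by rw [hp₂eq]) w, hq1] at hIH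
        rw [iteT_zero hp2]
        rcases eq_or_ne w p.1 with h1 | h1
        · simp only [if_pos h1, if_pos h1.symm] at hIH ⊢; linarith [hIH]
        · simp only [if_neg h1, if_neg (Ne.symm h1)] at hIH ⊢; linarith [hIH]
    · -- int-bwd : p = (x,true), p₂ = (x,false)
      have hp₂eq : p₂ = (p.1, false) := Prod.ext_iff.mpr ⟨hq1, hq2⟩
      have hpeq : p = (p.1, true) := Prod.ext_iff.mpr ⟨rfl, hp2⟩
      have hε0 : ε p.1 = 0 := by
        rcases hεv p.1 with h | h | h
        · exfalso
          obtain ⟨-, hm⟩ := hε1 p.1 h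
          exact hpnot (List.mem_cons_of_mem _ (hpeq ▸ hm))
        · exact h
        · exfalso
          obtain ⟨-, hm⟩ := hε2 p.1 h
          exact hp2not (hp₂eq ▸ hm)
      refine ⟨Ta, Td, fun w => if w = p.1 then ε w - 1 else ε w, hTaS, hTaF, hTdF, ?_, ?_,
        ?_, ?_, ?_, ?_, ?_⟩
      · intro e he
        rw [List.cons_append]
        exact List.mem_cons_of_mem _ (hTaM e he)
      · intro e he
        rw [List.cons_append]
        exact List.mem_cons_of_mem _ (hTdM e he)
      · intro w
        dsimp only
        by_cases h : w = p.1
        · subst h; rw [if_pos rfl, hε0]; simp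
        · rw [if_neg h]; exact hεv w
      · intro w hw
        dsimp only at hw
        by_cases h : w = p.1
        · subst h; rw [if_pos rfl, hε0] at hw; omega
        · rw [if_neg h] at hw
          obtain ⟨hb, hm⟩ := hε1 w hw
          exact ⟨hb, by rw [List.cons_append]; exact List.mem_cons_of_mem _ hm⟩
      · intro w hw
        dsimp only at hw
        by_cases h : w = p.1
        · subst h
          refine ⟨hcap, ?_⟩
          rw [List.cons_append]
          exact hp₂eq ▸ (List.mem_cons_self (a := p₂))
        · rw [if_neg h] at hw
          obtain ⟨hb, hm⟩ := hε2 w hw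
          exact ⟨hb, by rw [List.cons_append]; exact List.mem_cons_of_mem _ hm⟩
      · intro w
        dsimp only
        have hIH := hin w
        rw [iteF_fst (show p₂.2 = false by rw [hp₂eq]) w, hq1] at hIH
        rw [iteF_zero hp2]
        rcases eq_or_ne w p.1 with h1 | h1
        · simp only [if_pos h1, if_pos h1.symm] at hIH ⊢; linarith [hIH]
        · simp only [if_neg h1, if_neg (Ne.symm h1)] at hIH ⊢; linarith [hIH]
      · intro w
        dsimp only
        have hIH := hout w
        rw [iteT_zero (show p₂.2 = false by rw [hp₂eq]) w] at hIH
        rw [iteT_fst hp2]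
        rcases eq_or_ne w p.1 with h1 | h1
        · simp only [if_pos h1, if_pos h1.symm] at hIH ⊢; linarith [hIH]
        · simp only [if_neg h1, if_neg (Ne.symm h1)] at hIH ⊢; linarith [hIH]


lemma card_filter_sdiff_add [DecidableEq E] {F S : Finset E} (p : E → Prop) [DecidablePred p]
    (hFS : F ⊆ S) :
    ((S \ F).filter p).card + (F.filter p).card = (S.filter p).card := by
  conv_rhs => rw [← Finset.sdiff_union_of_subset hFS]
  rw [Finset.filter_union]
  exact (Finset.card_union_of_disjoint
    (Finset.disjoint_filter_filter Finset.sdiff_disjoint)).symm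

lemma cut_false [Fintype V] [Fintype E] [DecidableEq E] (d : E → V × V) (k : ℕ) (hk : 0 < k)
    (S F : Finset E) (hFS : F ⊆ S)
    (hbalS : ∀ v, indeg d S v = outdeg d S v) (hbalF : ∀ v, indeg d F v = outdeg d F v)
    (X : Set (V × Bool)) (hcl : ∀ p q, p ∈ X → Rel2 d k S F p q → q ∈ X) (v₀ : V)
    (hv : (((v₀, true) : V × Bool) ∈ X ∧ ((v₀, false) : V × Bool) ∉ X ∧
            k * indeg d F v₀ + k ≤ indeg d S v₀) ∨
          (((v₀, false) : V × Bool) ∈ X ∧ ((v₀, true) : V × Bool) ∉ X ∧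
            indeg d S v₀ + k ≤ k * indeg d F v₀)) :
    False := by
  classical
  set A : Finset V := univ.filter (fun w => ((w, true) : V × Bool) ∈ X) with hA
  set B : Finset V := univ.filter (fun w => ((w, false) : V × Bool) ∈ X) with hB
  have hmemA : ∀ w, w ∈ A ↔ ((w, true) : V × Bool) ∈ X := by
    intro w; simp [hA]
  have hmemB : ∀ w, w ∈ B ↔ ((w, false) : V × Bool) ∈ X := by
    intro w; simp [hB]
  have hc1 : ∀ e ∈ S, e ∉ F → (d e).1 ∈ A → (d e).2 ∈ B := by
    intro e heS henF h1
    rw [hmemB]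
    exact hcl _ _ ((hmemA _).1 h1) (Or.inl ⟨e, heS, henF, rfl, rfl, rfl⟩)
  have hc2 : ∀ e ∈ F, (d e).2 ∈ B → (d e).1 ∈ A := by
    intro e heF h1
    rw [hmemA]
    exact hcl _ _ ((hmemB _).1 h1) (Or.inr (Or.inl ⟨e, heF, rfl, rfl, rfl⟩))
  have hc3 : ∀ w ∈ B, k * indeg d F w < indeg d S w → w ∈ A := by
    intro w hw hlt
    rw [hmemA]
    exact hcl _ _ ((hmemB _).1 hw) (Or.inr (Or.inr (Or.inl ⟨rfl, rfl, rfl, hlt⟩)))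
  have hc4 : ∀ w ∈ A, indeg d S w < k * indeg d F w → w ∈ B := by
    intro w hw hlt
    rw [hmemB]
    exact hcl _ _ ((hmemA _).1 hw) (Or.inr (Or.inr (Or.inr ⟨rfl, rfl, rfl, hlt⟩)))
  set a1 := (F.filter (fun e => (d e).1 ∈ A)).card with ha1
  set a2 := (F.filter (fun e => (d e).2 ∈ B)).card with ha2
  set n1 := (S.filter (fun e => (d e).1 ∈ A)).card with hn1
  set n2 := (S.filter (fun e => (d e).2 ∈ B)).card with hn2
  have hbF : ∑ w ∈ A, indeg d F w = a1 := by
    rw [Finset.sum_congr rfl (fun w _ => hbalF w), sum_outdeg_set]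
  have haF : ∑ w ∈ B, indeg d F w = a2 := sum_indeg_set d F B
  have hbS : ∑ w ∈ A, indeg d S w = n1 := by
    rw [Finset.sum_congr rfl (fun w _ => hbalS w), sum_outdeg_set]
  have haS : ∑ w ∈ B, indeg d S w = n2 := sum_indeg_set d S B
  -- inequality (i)
  have hs1 := card_filter_sdiff_add (fun e => (d e).1 ∈ A) hFS
  have hs2 := card_filter_sdiff_add (fun e => (d e).2 ∈ B) hFS
  have hmono : ((S \ F).filter (fun e => (d e).1 ∈ A)) ⊆ ((S \ F).filter (fun e => (d e).2 ∈ B)) := by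
    intro e he
    rw [Finset.mem_filter] at he ⊢
    obtain ⟨heS, henF⟩ := Finset.mem_sdiff.1 he.1
    exact ⟨he.1, hc1 e heS henF he.2⟩
  have hi : n1 + a2 ≤ n2 + a1 := by
    have := Finset.card_le_card hmono
    omega
  have hii : a2 ≤ a1 := by
    refine Finset.card_le_card ?_
    intro e he
    rw [Finset.mem_filter] at he ⊢
    exact ⟨he.1, hc2 e he.1 he.2⟩
  -- lower bound for K
  have hKlow : (0:ℤ) ≤ (k:ℤ) * a1 - n1 - (k:ℤ) * a2 + n2 := by
    have h1 : (0:ℤ) ≤ (a1:ℤ) - a2 := by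
      have : (a2:ℤ) ≤ (a1:ℤ) := by exact_mod_cast hii
      linarith
    have h2 : (1:ℤ) ≤ (k:ℤ) := by exact_mod_cast hk
    have h3 : (1:ℤ) * ((a1:ℤ) - a2) ≤ (k:ℤ) * ((a1:ℤ) - a2) :=
      mul_le_mul_of_nonneg_right h2 h1
    have h4 : (n1:ℤ) - n2 ≤ (a1:ℤ) - a2 := by
      have : (n1:ℤ) + a2 ≤ n2 + a1 := by exact_mod_cast hi
      linarith
    nlinarith [h3, h4]
  -- upper bound for K via vertex sums
  have hcast : ∀ (C : Finset V) (m : ℕ), (∑ w ∈ C, indeg d F w = m) →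
      ∑ w ∈ C, ((k:ℤ) * indeg d F w) = (k:ℤ) * m := by
    intro C m hm
    rw [← Finset.mul_sum]
    congr 1
    rw [← Nat.cast_sum, hm]
  have hcast2 : ∀ (C : Finset V) (m : ℕ), (∑ w ∈ C, indeg d S w = m) →
      ∑ w ∈ C, ((indeg d S w : ℤ)) = (m:ℤ) := by
    intro C m hm
    rw [← Nat.cast_sum, hm]
  have hKsum : (k:ℤ) * a1 - n1 - (k:ℤ) * a2 + n2
      = (∑ w ∈ A, ((k:ℤ) * indeg d F w - indeg d S w))
        - (∑ w ∈ B, ((k:ℤ) * indeg d F w - indeg d S w)) := by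
    rw [Finset.sum_sub_distrib, Finset.sum_sub_distrib,
      hcast A a1 hbF, hcast B a2 haF, hcast2 A n1 hbS, hcast2 B n2 haS]
    ring
  -- split sums
  set u : V → ℤ := fun w => (k:ℤ) * indeg d F w - indeg d S w with hu
  have hsplitA : ∑ w ∈ A, u w = ∑ w ∈ A \ B, u w + ∑ w ∈ A ∩ B, u w := by
    rw [← Finset.sum_sdiff (Finset.inter_subset_left : A ∩ B ⊆ A),
      Finset.sdiff_inter_self_left]
  have hsplitB : ∑ w ∈ B, u w = ∑ w ∈ B \ A, u w + ∑ w ∈ A ∩ B, u w := by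
    rw [← Finset.sum_sdiff (Finset.inter_subset_right : A ∩ B ⊆ B)]
    congr 1
    rw [Finset.inter_comm, Finset.sdiff_inter_self_left]
  have hAB : ∀ w ∈ A \ B, u w ≤ 0 := by
    intro w hw
    obtain ⟨hwA, hwB⟩ := Finset.mem_sdiff.1 hw
    by_contra hcon
    push_neg at hcon
    have : indeg d S w < k * indeg d F w := by
      rw [hu] at hcon
      simp only at hcon
      exact_mod_cast by push_cast at hcon ⊢; linarith
    exact hwB (hc4 w hwA this)
  have hBA : ∀ w ∈ B \ A, 0 ≤ u w := by
    intro w hw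
    obtain ⟨hwB, hwA⟩ := Finset.mem_sdiff.1 hw
    by_contra hcon
    push_neg at hcon
    have : k * indeg d F w < indeg d S w := by
      rw [hu] at hcon
      simp only at hcon
      exact_mod_cast by push_cast at hcon ⊢; linarith
    exact hwA (hc3 w hwB this)
  -- final contradiction
  rcases hv with ⟨hvA, hvB, hsmall⟩ | ⟨hvB, hvA, hbig⟩
  · have hvmem : v₀ ∈ A \ B :=
      Finset.mem_sdiff.2 ⟨(hmemA v₀).2 hvA, fun h => hvB ((hmemB v₀).1 h)⟩
    have huv : u v₀ ≤ -(k:ℤ) := by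
      rw [hu]
      simp only
      have : (k:ℤ) * indeg d F v₀ + k ≤ indeg d S v₀ := by exact_mod_cast hsmall
      linarith
    have h5 : ∑ w ∈ A \ B, u w ≤ -(k:ℤ) := by
      rw [Finset.sum_eq_sum_sdiff_singleton_add hvmem u]
      have h6 : ∑ w ∈ (A \ B) \ {v₀}, u w ≤ 0 :=
        Finset.sum_nonpos (fun w hw => hAB w (Finset.mem_sdiff.1 hw).1)
      linarith
    have h7 : (0:ℤ) ≤ ∑ w ∈ B \ A, u w := Finset.sum_nonneg hBA
    have h8 : (0:ℤ) < k := by exact_mod_cast hk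
    rw [hKsum, hsplitA, hsplitB] at hKlow
    linarith
  · have hvmem : v₀ ∈ B \ A :=
      Finset.mem_sdiff.2 ⟨(hmemB v₀).2 hvB, fun h => hvA ((hmemA v₀).1 h)⟩
    have huv : (k:ℤ) ≤ u v₀ := by
      rw [hu]
      simp only
      have : (indeg d S v₀ : ℤ) + k ≤ (k:ℤ) * indeg d F v₀ := by exact_mod_cast hbig
      linarith
    have h5 : (k:ℤ) ≤ ∑ w ∈ B \ A, u w :=
      le_trans huv (Finset.single_le_sum (f := u) (fun w hw => hBA w hw) hvmem)
    have h6 : ∑ w ∈ A \ B, u w ≤ 0 := Finset.sum_nonpos hAB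
    have h8 : (0:ℤ) < k := by exact_mod_cast hk
    rw [hKsum, hsplitA, hsplitB] at hKlow
    linarith


lemma augment [Fintype V] [Fintype E] [DecidableEq E] (d : E → V × V) (k : ℕ) (hk : 0 < k)
    (S F : Finset E) (hFS : F ⊆ S)
    (hbalS : ∀ v, indeg d S v = outdeg d S v) (hbalF : ∀ v, indeg d F v = outdeg d F v)
    (v₀ : V)
    (hviol : k * indeg d F v₀ + k ≤ indeg d S v₀ ∨ indeg d S v₀ + k ≤ k * indeg d F v₀) :
    ∃ F', F' ⊆ S ∧ (∀ v, indeg d F' v = outdeg d F' v) ∧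
      (∀ w, ∃ δ : ℤ, (indeg d F' w : ℤ) = indeg d F w + δ ∧ (δ = 1 ∨ δ = 0 ∨ δ = -1) ∧
        (δ = 1 → k * indeg d F w < indeg d S w) ∧ (δ = -1 → indeg d S w < k * indeg d F w)) ∧
      ((k * indeg d F v₀ + k ≤ indeg d S v₀ ∧ (indeg d F' v₀ : ℤ) = indeg d F v₀ + 1) ∨
       (indeg d S v₀ + k ≤ k * indeg d F v₀ ∧ (indeg d F' v₀ : ℤ) = indeg d F v₀ - 1)) := by
  classical
  rcases hviol with hsmall | hbig
  · -- below window : increase throughput at v₀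
    set X : Set (V × Bool) :=
      {p | Relation.ReflTransGen (Rel2 d k S F) ((v₀, true) : V × Bool) p} with hX
    have hcl : ∀ p q, p ∈ X → Rel2 d k S F p q → q ∈ X := by
      intro p q hp hr
      exact Relation.ReflTransGen.tail hp hr
    by_cases hreach : (((v₀, false) : V × Bool)) ∈ X
    · obtain ⟨l, hchain, hnd⟩ := exists_nodup_chain hreach (by simp)
      obtain ⟨Ta, Td, ε, hTaS, hTaF, hTdF, hTaM, hTdM, hεv, hε1, hε2, hin, hout⟩ :=
        aug_chain d k S F hFS l ((v₀, true)) ((v₀, false)) hchain hnd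
      have hε0 : ε v₀ = 0 := by
        rcases hεv v₀ with h | h | h
        · exfalso
          obtain ⟨-, hm⟩ := hε1 v₀ h
          exact (List.nodup_cons.1 hnd).1 hm
        · exact h
        · exfalso
          obtain ⟨hb, -⟩ := hε2 v₀ h
          omega
      refine ⟨(F ∪ Ta) \ Td, ?_, ?_, ?_, ?_⟩
      · exact le_trans (Finset.sdiff_subset) (Finset.union_subset hFS hTaS)
      · intro v
        have h1 := hin v
        have h2 := hout v
        rw [iteF_fst (show ((v₀, false) : V × Bool).2 = false from rfl) v,
          iteF_zero (show ((v₀, true) : V × Bool).2 = true from rfl) v] at h1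
        rw [iteT_zero (show ((v₀, false) : V × Bool).2 = false from rfl) v,
          iteT_fst (show ((v₀, true) : V × Bool).2 = true from rfl) v] at h2
        have hb := hbalF v
        have : (indeg d ((F ∪ Ta) \ Td) v : ℤ) = (outdeg d ((F ∪ Ta) \ Td) v : ℤ) := by
          rw [h1, h2, hb]
          ring
        exact_mod_cast this
      · intro w
        have h1 := hin w
        rw [iteF_fst (show ((v₀, false) : V × Bool).2 = false from rfl) w,
          iteF_zero (show ((v₀, true) : V × Bool).2 = true from rfl) w] at h1
        refine ⟨ε w + (if (((v₀, false) : V × Bool)).1 = w then 1 else 0), by linarith [h1], ?_, ?_, ?_⟩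
        · rcases eq_or_ne v₀ w with hw | hw
          · subst hw
            rw [if_pos rfl, hε0]
            simp
          · rw [if_neg (by simpa using hw)]
            simpa using hεv w
        · intro hδ
          rcases eq_or_ne v₀ w with hw | hw
          · subst hw; omega
          · rw [if_neg (by simpa using hw)] at hδ
            simp only [add_zero] at hδ
            exact (hε1 w hδ).1
        · intro hδ
          rcases eq_or_ne v₀ w with hw | hw
          · subst hw
            rw [if_pos rfl, hε0] at hδ
            omega
          · rw [if_neg (by simpa using hw)] at hδ
            simp only [add_zero] at hδ
            exact (hε2 w hδ).1
      · left
        refine ⟨hsmall, ?_⟩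
        have h1 := hin v₀
        rw [iteF_fst (show ((v₀, false) : V × Bool).2 = false from rfl) v₀,
          iteF_zero (show ((v₀, true) : V × Bool).2 = true from rfl) v₀] at h1
        rw [h1, hε0, if_pos rfl]
        ring
    · exfalso
      exact cut_false d k hk S F hFS hbalS hbalF X hcl v₀
        (Or.inl ⟨Relation.ReflTransGen.refl, hreach, hsmall⟩)
  · -- above window : decrease throughput at v₀
    set X : Set (V × Bool) :=
      {p | Relation.ReflTransGen (Rel2 d k S F) ((v₀, false) : V × Bool) p} with hX
    have hcl : ∀ p q, p ∈ X → Rel2 d k S F p q → q ∈ X := by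
      intro p q hp hr
      exact Relation.ReflTransGen.tail hp hr
    by_cases hreach : (((v₀, true) : V × Bool)) ∈ X
    · obtain ⟨l, hchain, hnd⟩ := exists_nodup_chain hreach (by simp)
      obtain ⟨Ta, Td, ε, hTaS, hTaF, hTdF, hTaM, hTdM, hεv, hε1, hε2, hin, hout⟩ :=
        aug_chain d k S F hFS l ((v₀, false)) ((v₀, true)) hchain hnd
      have hε0 : ε v₀ = 0 := by
        rcases hεv v₀ with h | h | h
        · exfalso
          obtain ⟨hb, -⟩ := hε1 v₀ h
          omega
        · exact h
        · exfalso
          obtain ⟨-, hm⟩ := hε2 v₀ h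
          exact (List.nodup_cons.1 hnd).1 hm
      refine ⟨(F ∪ Ta) \ Td, ?_, ?_, ?_, ?_⟩
      · exact le_trans (Finset.sdiff_subset) (Finset.union_subset hFS hTaS)
      · intro v
        have h1 := hin v
        have h2 := hout v
        rw [iteF_zero (show ((v₀, true) : V × Bool).2 = true from rfl) v,
          iteF_fst (show ((v₀, false) : V × Bool).2 = false from rfl) v] at h1
        rw [iteT_fst (show ((v₀, true) : V × Bool).2 = true from rfl) v,
          iteT_zero (show ((v₀, false) : V × Bool).2 = false from rfl) v] at h2
        have hb := hbalF v
        have : (indeg d ((F ∪ Ta) \ Td) v : ℤ) = (outdeg d ((F ∪ Ta) \ Td) v : ℤ) := by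
          rw [h1, h2, hb]
          ring
        exact_mod_cast this
      · intro w
        have h1 := hin w
        rw [iteF_zero (show ((v₀, true) : V × Bool).2 = true from rfl) w,
          iteF_fst (show ((v₀, false) : V × Bool).2 = false from rfl) w] at h1
        refine ⟨ε w - (if (((v₀, false) : V × Bool)).1 = w then 1 else 0), by linarith [h1], ?_, ?_, ?_⟩
        · rcases eq_or_ne v₀ w with hw | hw
          · subst hw
            rw [if_pos rfl, hε0]
            simp
          · rw [if_neg (by simpa using hw)]
            simpa using hεv w
        · intro hδ
          rcases eq_or_ne v₀ w with hw | hw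
          · subst hw
            rw [if_pos rfl, hε0] at hδ
            omega
          · rw [if_neg (by simpa using hw)] at hδ
            simp only [sub_zero] at hδ
            exact (hε1 w hδ).1
        · intro hδ
          rcases eq_or_ne v₀ w with hw | hw
          · subst hw; omega
          · rw [if_neg (by simpa using hw)] at hδ
            simp only [sub_zero] at hδ
            exact (hε2 w hδ).1
      · right
        refine ⟨hbig, ?_⟩
        have h1 := hin v₀
        rw [iteF_zero (show ((v₀, true) : V × Bool).2 = true from rfl) v₀,
          iteF_fst (show ((v₀, false) : V × Bool).2 = false from rfl) v₀] at h1
        rw [h1, hε0, if_pos rfl]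
        ring
    · exfalso
      exact cut_false d k hk S F hFS hbalS hbalF X hcl v₀
        (Or.inr ⟨Relation.ReflTransGen.refl, hreach, hbig⟩)

/-- truncated penalty -/
def pen (k t x : ℕ) : ℕ := ((k:ℤ) * x - t).natAbs - (k-1)

lemma pen_zero {k t x : ℕ} (hk : 0 < k) (h : pen k t x = 0) :
    k * x ≤ t + (k-1) ∧ t ≤ k * x + (k-1) := by
  unfold pen at h
  obtain ⟨P, hP⟩ : ∃ P : ℤ, (k:ℤ) * x = P := ⟨_, rfl⟩
  rw [hP] at h
  constructor
  · have g1 : P ≤ (t:ℤ) + ((k - 1 : ℕ) : ℤ) := by omega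
    rw [← hP] at g1
    exact_mod_cast g1
  · have g1 : (t:ℤ) ≤ P + ((k - 1 : ℕ) : ℤ) := by omega
    rw [← hP] at g1
    exact_mod_cast g1

lemma pen_pos {k t x : ℕ} (hk : 0 < k) (h : pen k t x ≠ 0) :
    k * x + k ≤ t ∨ t + k ≤ k * x := by
  unfold pen at h
  obtain ⟨P, hP⟩ : ∃ P : ℤ, (k:ℤ) * x = P := ⟨_, rfl⟩
  rw [hP] at h
  have : P + k ≤ (t:ℤ) ∨ (t:ℤ) + k ≤ P := by omega
  rcases this with h1 | h1
  · left
    rw [← hP] at h1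
    exact_mod_cast h1
  · right
    rw [← hP] at h1
    exact_mod_cast h1

lemma pen_step {k t : ℕ} (hk : 0 < k) {a b : ℕ} {δ : ℤ} (hb : (b:ℤ) = a + δ)
    (hδ : δ = 1 ∨ δ = 0 ∨ δ = -1) (h1 : δ = 1 → k * a < t) (h2 : δ = -1 → t < k * a) :
    pen k t b ≤ pen k t a := by
  unfold pen
  obtain ⟨P, hP⟩ : ∃ P : ℤ, (k:ℤ) * a = P := ⟨_, rfl⟩
  have hQ : (k:ℤ) * b = P + k * δ := by rw [← hP, hb]; ring
  rw [hQ, hP]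
  rcases hδ with h | h | h <;> subst h
  · have hlt : P < (t:ℤ) := by
      rw [← hP]
      exact_mod_cast h1 rfl
    omega
  · omega
  · have hlt : (t:ℤ) < P := by
      rw [← hP]
      exact_mod_cast h2 rfl
    omega

lemma pen_step_strict {k t : ℕ} (hk : 0 < k) {a b : ℕ} {δ : ℤ} (hb : (b:ℤ) = a + δ)
    (hv : (k * a + k ≤ t ∧ δ = 1) ∨ (t + k ≤ k * a ∧ δ = -1)) :
    pen k t b < pen k t a := by
  unfold pen
  obtain ⟨P, hP⟩ : ∃ P : ℤ, (k:ℤ) * a = P := ⟨_, rfl⟩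
  have hQ : (k:ℤ) * b = P + k * δ := by rw [← hP, hb]; ring
  rw [hQ, hP]
  rcases hv with ⟨hs, h⟩ | ⟨hs, h⟩ <;> subst h
  · have hlt : P + k ≤ (t:ℤ) := by
      rw [← hP]
      exact_mod_cast hs
    omega
  · have hlt : (t:ℤ) + k ≤ P := by
      rw [← hP]
      exact_mod_cast hs
    omega

lemma extract [Fintype V] [Fintype E] (d : E → V × V) (k : ℕ) (hk : 0 < k) (S : Finset E)
    (hbalS : ∀ v, indeg d S v = outdeg d S v) :
    ∃ F, F ⊆ S ∧ (∀ v, indeg d F v = outdeg d F v) ∧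
      ∀ v, k * indeg d F v ≤ indeg d S v + (k-1) ∧ indeg d S v ≤ k * indeg d F v + (k-1) := by
  classical
  suffices h : ∀ (n : ℕ) (F : Finset E), F ⊆ S → (∀ v, indeg d F v = outdeg d F v) →
      (∑ v, pen k (indeg d S v) (indeg d F v)) ≤ n →
      ∃ F', F' ⊆ S ∧ (∀ v, indeg d F' v = outdeg d F' v) ∧
        ∀ v, k * indeg d F' v ≤ indeg d S v + (k-1) ∧ indeg d S v ≤ k * indeg d F' v + (k-1) by
    exact h _ ∅ (Finset.empty_subset S) (fun v => by simp [indeg, outdeg]) (le_refl _)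
  intro n
  induction n using Nat.strong_induction_on with
  | _ n ihn =>
  intro F hFS hbalF hΦ
  by_cases hdone : ∀ v, pen k (indeg d S v) (indeg d F v) = 0
  · exact ⟨F, hFS, hbalF, fun v => pen_zero hk (hdone v)⟩
  push_neg at hdone
  obtain ⟨v₀, hv₀⟩ := hdone
  have hviol := pen_pos hk hv₀
  obtain ⟨F', hF'S, hbalF', hδ, hv₀'⟩ := augment d k hk S F hFS hbalS hbalF v₀ hviol
  have hle : ∀ v, pen k (indeg d S v) (indeg d F' v) ≤ pen k (indeg d S v) (indeg d F v) := by
    intro v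
    obtain ⟨δ, h1, h2, h3, h4⟩ := hδ v
    exact pen_step hk h1 h2 h3 h4
  have hlt : pen k (indeg d S v₀) (indeg d F' v₀) < pen k (indeg d S v₀) (indeg d F v₀) := by
    obtain ⟨δ, h1, h2, h3, h4⟩ := hδ v₀
    rcases hv₀' with ⟨hs, he⟩ | ⟨hs, he⟩
    · have hδ1 : δ = 1 := by omega
      exact pen_step_strict hk h1 (Or.inl ⟨hs, hδ1⟩)
    · have hδ1 : δ = -1 := by omega
      exact pen_step_strict hk h1 (Or.inr ⟨hs, hδ1⟩)
  have hΦ' : (∑ v, pen k (indeg d S v) (indeg d F' v)) < n := by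
    calc (∑ v, pen k (indeg d S v) (indeg d F' v))
        < ∑ v, pen k (indeg d S v) (indeg d F v) :=
          Finset.sum_lt_sum (fun i _ => hle i) ⟨v₀, Finset.mem_univ v₀, hlt⟩
      _ ≤ n := hΦ
  exact ihn _ hΦ' F' hF'S hbalF' (le_refl _)


lemma arith (k x y t : ℕ) (hk : 1 ≤ k) (hxt : x ≤ t)
    (hA : (k+1)*x ≤ t + k) (hB : t ≤ (k+1)*x + k)
    (hC : k*y ≤ (t - x) + (k-1)) (hD : (t - x) ≤ k*y + (k-1)) :
    (k+1)*y ≤ t + k ∧ t ≤ (k+1)*y + k := by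
  have eA : (k+1)*x = k*x + x := by ring
  have eY : (k+1)*y = k*y + y := by ring
  rw [eA] at hA hB
  rw [eY]
  have hyx : y ≤ x + 1 := by
    by_contra hcon
    push_neg at hcon
    have h5 : k*x + 2*k ≤ k*y := by
      calc k*x + 2*k = k*(x+2) := by ring
        _ ≤ k*y := Nat.mul_le_mul_left k (by omega)
    generalize hP : k*x = P at h5 hB
    generalize hQ : k*y = Q at h5 hC
    omega
  have hxy : x ≤ y + 1 := by
    by_contra hcon
    push_neg at hcon
    have h5 : k*y + 2*k ≤ k*x := by
      calc k*y + 2*k = k*(y+2) := by ring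
        _ ≤ k*x := Nat.mul_le_mul_left k (by omega)
    generalize hP : k*x = P at h5 hA
    generalize hQ : k*y = Q at h5 hD
    omega
  constructor
  · generalize hQ : k*y = Q at hC ⊢
    omega
  · generalize hQ : k*y = Q at hD ⊢
    omega

lemma step2 [Fintype V] [Fintype E] (d : E → V × V) :
    ∀ (k : ℕ), 0 < k → ∀ S : Finset E, (∀ v, indeg d S v = outdeg d S v) →
    ∃ c : E → Fin k, ∀ (v : V) (i : Fin k),
      indeg d (S.filter fun e => c e = i) v = outdeg d (S.filter fun e => c e = i) v ∧
      k * indeg d (S.filter fun e => c e = i) v ≤ indeg d S v + (k-1) ∧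
      indeg d S v ≤ k * indeg d (S.filter fun e => c e = i) v + (k-1) := by
  intro k
  induction k with
  | zero => intro h; exact absurd h (by norm_num)
  | succ k ihk =>
    intro _ S hbalS
    classical
    by_cases hk0 : k = 0
    · subst hk0
      refine ⟨fun _ => 0, ?_⟩
      intro v i
      have hi : i = 0 := by omega
      subst hi
      have hfe : (S.filter fun _ => (0 : Fin 1) = 0) = S :=
        Finset.filter_true_of_mem (fun e _ => rfl)
      rw [hfe]
      refine ⟨hbalS v, ?_, ?_⟩ <;> omega
    · have hkpos : 0 < k := Nat.pos_of_ne_zero hk0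
      obtain ⟨F, hFS, hbalF, hbnd⟩ := extract d (k+1) (by omega) S hbalS
      have hbalS' : ∀ v, indeg d (S \ F) v = outdeg d (S \ F) v := by
        intro v
        have h1 := indeg_sdiff_add d hFS v
        have h2 := outdeg_sdiff_add d hFS v
        have h3 := hbalS v
        have h4 := hbalF v
        omega
      obtain ⟨c', hc'⟩ := ihk hkpos (S \ F) hbalS'
      refine ⟨fun e => if e ∈ F then 0 else (c' e).succ, ?_⟩
      intro v i
      refine Fin.cases ?_ ?_ i
      · have hfe : (S.filter fun e => (if e ∈ F then (0 : Fin (k+1)) else (c' e).succ) = 0) = F := by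
          ext e
          simp only [Finset.mem_filter]
          constructor
          · rintro ⟨heS, hce⟩
            by_contra henF
            rw [if_neg henF] at hce
            exact Fin.succ_ne_zero _ hce
          · intro heF
            exact ⟨hFS heF, by rw [if_pos heF]⟩
        rw [hfe]
        exact ⟨hbalF v, (hbnd v).1, (hbnd v).2⟩
      · intro j
        have hfe : (S.filter fun e => (if e ∈ F then (0 : Fin (k+1)) else (c' e).succ) = j.succ)
            = ((S \ F).filter fun e => c' e = j) := by
          ext e
          simp only [Finset.mem_filter, Finset.mem_sdiff]
          constructor
          · rintro ⟨heS, hce⟩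
            by_cases heF : e ∈ F
            · rw [if_pos heF] at hce
              exact absurd hce.symm (Fin.succ_ne_zero j)
            · rw [if_neg heF] at hce
              exact ⟨⟨heS, heF⟩, Fin.succ_injective _ hce⟩
          · rintro ⟨⟨heS, heF⟩, hce⟩
            exact ⟨heS, by rw [if_neg heF, hce]⟩
        rw [hfe]
        obtain ⟨hbal', hC, hD⟩ := hc' v j
        have hx : indeg d F v ≤ indeg d S v := indeg_mono d hFS v
        have ht' : indeg d (S \ F) v = indeg d S v - indeg d F v := by
          have := indeg_sdiff_add d hFS v
          omega
        rw [ht'] at hC hD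
        have hA := (hbnd v).1
        have hB := (hbnd v).2
        simp only [Nat.add_sub_cancel] at hA hB
        have hres := arith k (indeg d F v) (indeg d ((S \ F).filter fun e => c' e = j) v)
          (indeg d S v) (by omega) hx hA hB hC hD
        refine ⟨hbal', ?_, ?_⟩
        · simpa only [Nat.add_sub_cancel] using hres.1
        · simpa only [Nat.add_sub_cancel] using hres.2


end
end HiltonAux

open HiltonAux in
/-- Hilton's theorem: every Eulerian multigraph decomposes into `k` even factors with
degrees within `2` of `d_G(v)/k`. -/
theorem hilton_even_factorization [Fintype V] [Fintype E] [DecidableEq V]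
    (ends : E → V × V) (k : ℕ) (hk : 0 < k)
    (heven : ∀ v : V, Even (mdeg ends univ v)) :
    ∃ c : E → Fin k, ∀ v : V, ∀ i : Fin k,
      Even (mdeg ends (univ.filter fun e => c e = i) v) ∧
      |((mdeg ends (univ.filter fun e => c e = i) v : ℝ)) -
        (mdeg ends univ v : ℝ) / (k : ℝ)| < 2 := by
  classical
  obtain ⟨f, hf⟩ := euler_orient ends heven
  obtain ⟨c, hc⟩ := step2 (dd ends f) k hk univ hf
  refine ⟨c, ?_⟩
  intro v i
  obtain ⟨hbal, h1, h2⟩ := hc v i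
  have hmd : mdeg ends (univ.filter fun e => c e = i) v
      = 2 * indeg (dd ends f) (univ.filter fun e => c e = i) v := by
    have := mdeg_eq_dd ends f (univ.filter fun e => c e = i) v
    omega
  have hmdU : mdeg ends univ v = 2 * indeg (dd ends f) univ v := by
    have h3 := mdeg_eq_dd ends f univ v
    have h4 := hf v
    omega
  set x := indeg (dd ends f) (univ.filter fun e => c e = i) v with hxdef
  set t := indeg (dd ends f) univ v with htdef
  constructor
  · exact ⟨x, by omega⟩
  · obtain ⟨P, hP⟩ : ∃ P, k * x = P := ⟨_, rfl⟩
    rw [hP] at h1 h2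
    have hk1 : 1 ≤ k := hk
    have hkR : (1:ℝ) ≤ (k:ℝ) := by exact_mod_cast hk1
    have hkR0 : (0:ℝ) < (k:ℝ) := by linarith
    have hr1 : (P:ℝ) ≤ (t:ℝ) + ((k:ℝ) - 1) := by
      have h5 : (P:ℝ) ≤ ((t + (k-1) : ℕ) : ℝ) := by exact_mod_cast h1
      rw [Nat.cast_add, Nat.cast_sub hk1] at h5
      simpa using h5
    have hr2 : (t:ℝ) ≤ (P:ℝ) + ((k:ℝ) - 1) := by
      have h5 : ((t:ℕ):ℝ) ≤ ((P + (k-1) : ℕ) : ℝ) := by exact_mod_cast h2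
      rw [Nat.cast_add, Nat.cast_sub hk1] at h5
      simpa using h5
    have hPr : (P:ℝ) = (k:ℝ) * (x:ℝ) := by exact_mod_cast hP.symm
    rw [hmd, hmdU]
    push_cast
    rw [abs_lt]
    constructor
    · have hdiv : 2*(t:ℝ)/k < 2*(x:ℝ) + 2 := by
        rw [div_lt_iff₀ hkR0]
        nlinarith [hr2, hPr]
      linarith
    · have hdiv : 2*(x:ℝ) - 2 < 2*(t:ℝ)/k := by
        rw [lt_div_iff₀ hkR0]
        nlinarith [hr1, hPr]
      linarith
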